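/- For every d ≥ 1 there exist three absolutely continuous probability measures μ_1, μ_2, μ_3 on R^d such that no translated closed orthant O = {x ∈ R^d : x_i ≤ c_i for all i} (with any choice of orientation of each coordinate) satisfies μ_j(O) = 1/2 for j = 1, 2, 3. -/

import Mathlib

open MeasureTheory

/-- Uniform probability measure on the interval `(m - 1/2, m + 1/2)`. -/
noncomputable def orthantNu (m : ℝ) : Measure ℝ :=
  volume.restrict (Set.Ioo (m - 1/2) (m + 1/2))

lemma orthantNu_apply (m : ℝ) (s : Set ℝ) :
    orthantNu m s = volume (s ∩ Set.Ioo (m - 1/2) (m + 1/2)) :=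
  Measure.restrict_apply' measurableSet_Ioo

instance orthantNu_prob (m : ℝ) : IsProbabilityMeasure (orthantNu m) := by
  constructor
  rw [orthantNu_apply, Set.univ_inter, Real.volume_Ioo]
  norm_num

/-- The per-coordinate constraint set of an orthant. -/
def orthantS (b : Bool) (c : EReal) : Set ℝ :=
  {t : ℝ | (((if b then t else -t : ℝ)) : EReal) ≤ c}

lemma orthantS_true (c : EReal) :
    orthantS true c = {t : ℝ | ((t : ℝ) : EReal) ≤ c} := rfl

lemma orthantS_false (c : EReal) :
    orthantS false c = {t : ℝ | ((-t : ℝ) : EReal) ≤ c} := rfl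

lemma half_le_true {m : ℝ} {c : EReal}
    (h : 1/2 ≤ orthantNu m (orthantS true c)) : (m : EReal) ≤ c := by
  by_contra hc
  push_neg at hc
  induction c using EReal.rec with
  | top => exact not_top_lt hc
  | bot =>
    have hS : orthantS true ⊥ = (∅ : Set ℝ) := by
      ext t; simp [orthantS]
    rw [hS, orthantNu_apply, Set.empty_inter] at h
    simp at h
  | coe a =>
    have ha : a < m := by exact_mod_cast hc
    have hsub : orthantS true (a : EReal) ∩ Set.Ioo (m - 1/2) (m + 1/2)
        ⊆ Set.Ioc (m - 1/2) a := by
      rintro t ⟨ht1, ht2⟩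
      exact ⟨ht2.1, by simpa [orthantS, EReal.coe_le_coe_iff] using ht1⟩
    have hlt : volume (Set.Ioc (m - 1/2) a) < 1/2 := by
      rw [Real.volume_Ioc]
      calc ENNReal.ofReal (a - (m - 1/2)) < ENNReal.ofReal (1/2) := by
            rw [ENNReal.ofReal_lt_ofReal_iff (by norm_num)]
            linarith
        _ = 1/2 := by
            rw [ENNReal.ofReal_div_of_pos (by norm_num)]
            norm_num
    rw [orthantNu_apply] at h
    exact absurd h (not_le.mpr (lt_of_le_of_lt (measure_mono hsub) hlt))

lemma half_le_false {m : ℝ} {c : EReal}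
    (h : 1/2 ≤ orthantNu m (orthantS false c)) : ((-m : ℝ) : EReal) ≤ c := by
  by_contra hc
  push_neg at hc
  induction c using EReal.rec with
  | top => exact not_top_lt hc
  | bot =>
    have hS : orthantS false ⊥ = (∅ : Set ℝ) := by
      ext t; simp [orthantS]
    rw [hS, orthantNu_apply, Set.empty_inter] at h
    simp at h
  | coe a =>
    have ha : a < -m := by exact_mod_cast hc
    have hsub : orthantS false (a : EReal) ∩ Set.Ioo (m - 1/2) (m + 1/2)
        ⊆ Set.Ico (-a) (m + 1/2) := by
      rintro t ⟨ht1, ht2⟩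
      have : (-t : ℝ) ≤ a := by
        have h' := ht1
        simp only [orthantS, Set.mem_setOf_eq] at h'
        exact_mod_cast h'
      exact ⟨by linarith, ht2.2⟩
    have hlt : volume (Set.Ico (-a) (m + 1/2)) < 1/2 := by
      rw [Real.volume_Ico]
      calc ENNReal.ofReal (m + 1/2 - -a) < ENNReal.ofReal (1/2) := by
            rw [ENNReal.ofReal_lt_ofReal_iff (by norm_num)]
            linarith
        _ = 1/2 := by
            rw [ENNReal.ofReal_div_of_pos (by norm_num)]
            norm_num
    rw [orthantNu_apply] at h
    exact absurd h (not_le.mpr (lt_of_le_of_lt (measure_mono hsub) hlt))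

lemma full_true {m : ℝ} {c : EReal} (h : ((m + 1/2 : ℝ) : EReal) ≤ c) :
    orthantNu m (orthantS true c) = 1 := by
  rw [orthantNu_apply]
  have hsub : Set.Ioo (m - 1/2) (m + 1/2) ⊆ orthantS true c := by
    intro t ht
    have : ((t : ℝ) : EReal) ≤ ((m + 1/2 : ℝ) : EReal) := by
      exact_mod_cast ht.2.le
    exact this.trans h
  rw [Set.inter_eq_self_of_subset_right hsub, Real.volume_Ioo]
  norm_num

lemma full_false {m : ℝ} {c : EReal} (h : ((1/2 - m : ℝ) : EReal) ≤ c) :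
    orthantNu m (orthantS false c) = 1 := by
  rw [orthantNu_apply]
  have hsub : Set.Ioo (m - 1/2) (m + 1/2) ⊆ orthantS false c := by
    intro t ht
    have h1 : (-t : ℝ) ≤ 1/2 - m := by have := ht.1; linarith
    have : ((-t : ℝ) : EReal) ≤ ((1/2 - m : ℝ) : EReal) := by exact_mod_cast h1
    exact this.trans h
  rw [Set.inter_eq_self_of_subset_right hsub, Real.volume_Ioo]
  norm_num

/-- The product of the uniform measures is Lebesgue measure restricted to a cube. -/
lemma pi_orthantNu (d : ℕ) (m : ℝ) :
    Measure.pi (fun _ : Fin d => orthantNu m) =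
      (volume : Measure (Fin d → ℝ)).restrict
        (Set.pi Set.univ fun _ => Set.Ioo (m - 1/2) (m + 1/2)) := by
  refine Measure.pi_eq fun s hs => ?_
  rw [Measure.restrict_apply' (MeasurableSet.univ_pi fun _ => measurableSet_Ioo),
    ← Set.pi_inter_distrib, volume_pi, Measure.pi_pi]
  simp_rw [orthantNu_apply]

theorem orthant_halving_fails (d : ℕ) (hd : 1 ≤ d) :
    ∃ μ : Fin 3 → Measure (EuclideanSpace ℝ (Fin d)),
      (∀ j, IsProbabilityMeasure (μ j)) ∧ (∀ j, μ j ≪ volume) ∧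
      ∀ (ε : Fin d → Bool) (c : Fin d → EReal),
        ∃ j, μ j {x : EuclideanSpace ℝ (Fin d) |
            ∀ i, (((if ε i then x i else -x i) : ℝ) : EReal) ≤ c i} ≠ 1 / 2 := by
  classical
  set e := (MeasurableEquiv.toLp 2 (Fin d → ℝ)).symm with he
  set μ : Fin 3 → Measure (EuclideanSpace ℝ (Fin d)) :=
    fun j => (Measure.pi fun _ : Fin d => orthantNu ((j : ℕ) + 1 : ℝ)).map e.symm with hμ
  have hmap : ∀ (j : Fin 3) (s : Set (EuclideanSpace ℝ (Fin d))),
      μ j s = Measure.pi (fun _ : Fin d => orthantNu ((j : ℕ) + 1 : ℝ)) (e.symm ⁻¹' s) :=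
    fun j s => MeasurableEquiv.map_apply e.symm s
  refine ⟨μ, ?_, ?_, ?_⟩
  · intro j
    rw [hμ]
    exact Measure.isProbabilityMeasure_map e.symm.measurable.aemeasurable
  · intro j
    have hle : μ j ≤ volume := by
      rw [hμ]
      have h1 : Measure.pi (fun _ : Fin d => orthantNu ((j : ℕ) + 1 : ℝ))
          ≤ (volume : Measure (Fin d → ℝ)) := by
        rw [pi_orthantNu]
        exact Measure.restrict_le_self
      calc (Measure.pi fun _ : Fin d => orthantNu ((j : ℕ) + 1 : ℝ)).map e.symm
          ≤ (volume : Measure (Fin d → ℝ)).map e.symm :=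
            Measure.map_mono h1 e.symm.measurable
        _ = volume := ((EuclideanSpace.volume_preserving_symm_measurableEquiv_toLp (Fin d)).symm e).map_eq
    exact hle.absolutelyContinuous
  · intro ε c
    by_contra hcon
    push_neg at hcon
    -- the orthant, and its preimage as a product set
    set O : Set (EuclideanSpace ℝ (Fin d)) :=
      {x | ∀ i, (((if ε i then x i else -x i) : ℝ) : EReal) ≤ c i} with hO
    have hpre : e.symm ⁻¹' O = Set.pi Set.univ fun i => orthantS (ε i) (c i) := by
      ext y
      simp only [Set.mem_preimage, hO, Set.mem_setOf_eq, Set.mem_pi, Set.mem_univ,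
        forall_true_left, orthantS]
      rfl
    have key : ∀ j : Fin 3,
        (∏ i : Fin d, orthantNu ((j : ℕ) + 1 : ℝ) (orthantS (ε i) (c i))) = 1/2 := by
      intro j
      have := hcon j
      rw [hmap j O, hpre, Measure.pi_pi] at this
      exact this
    -- every factor is at least 1/2
    have hfac : ∀ (j : Fin 3) (i : Fin d),
        1/2 ≤ orthantNu ((j : ℕ) + 1 : ℝ) (orthantS (ε i) (c i)) := by
      intro j i
      have hprod := key j
      have hle : (∏ i : Fin d, orthantNu ((j : ℕ) + 1 : ℝ) (orthantS (ε i) (c i)))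
          ≤ orthantNu ((j : ℕ) + 1 : ℝ) (orthantS (ε i) (c i)) := by
        rw [← Finset.mul_prod_erase Finset.univ _ (Finset.mem_univ i)]
        calc orthantNu ((j : ℕ) + 1 : ℝ) (orthantS (ε i) (c i)) *
              ∏ k ∈ Finset.univ.erase i, orthantNu ((j : ℕ) + 1 : ℝ) (orthantS (ε k) (c k))
            ≤ orthantNu ((j : ℕ) + 1 : ℝ) (orthantS (ε i) (c i)) * 1 := by
              gcongr
              exact Finset.prod_le_one (fun k _ => zero_le) (fun k _ => prob_le_one)
          _ = _ := mul_one _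
      rw [← hprod]
      exact hle
    -- constraints from the first and third measure
    have hctrue : ∀ i, ε i = true → ((3 : ℝ) : EReal) ≤ c i := by
      intro i hi
      have := hfac 2 i
      rw [hi] at this
      have h3 : (((2 : Fin 3) : ℕ) + 1 : ℝ) = 3 := by norm_num
      rw [h3] at this
      exact half_le_true this
    have hcfalse : ∀ i, ε i = false → ((-1 : ℝ) : EReal) ≤ c i := by
      intro i hi
      have := hfac 0 i
      rw [hi] at this
      have h1 : (((0 : Fin 3) : ℕ) + 1 : ℝ) = 1 := by norm_num
      rw [h1] at this
      have := half_le_false this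
      simpa using this
    -- the middle measure then gives the whole mass to the orthant
    have hmid : ∀ i : Fin d, orthantNu ((((1 : Fin 3) : ℕ) + 1 : ℝ)) (orthantS (ε i) (c i)) = 1 := by
      intro i
      have h2 : ((((1 : Fin 3) : ℕ) + 1 : ℝ)) = 2 := by norm_num
      rw [h2]
      cases hb : ε i with
      | true =>
        apply full_true
        have h25 : (((2 : ℝ) + 1/2 : ℝ) : EReal) ≤ ((3 : ℝ) : EReal) := by
          exact_mod_cast (by norm_num : (2 + 1/2 : ℝ) ≤ 3)
        exact h25.trans (hctrue i hb)
      | false =>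
        apply full_false
        have h15 : (((1/2 - (2 : ℝ) : ℝ)) : EReal) ≤ ((-1 : ℝ) : EReal) := by
          exact_mod_cast (by norm_num : (1/2 - 2 : ℝ) ≤ -1)
        exact h15.trans (hcfalse i hb)
    have := key 1
    rw [Finset.prod_eq_one (fun i _ => hmid i)] at this
    have h12 := congrArg ENNReal.toReal this
    rw [ENNReal.toReal_one] at h12
    norm_num [ENNReal.toReal_div] at h12
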